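/- Let U be a free (nonprincipal) ultrafilter on ℕ. Then there is no sequence (μ_n)_{n∈ℕ} of countably additive probability measures on ℕ (with the discrete σ-algebra of all subsets) such that for every S ⊆ ℕ, the sequence μ_n(S) converges to 1 if S ∈ U and converges to 0 if S ∉ U. -/

import Mathlib

open MeasureTheory Filter Topology ENNReal

private lemma ennq2 : (1/4:ℝ≥0∞) + 1/2 = 3/4 := by
  rw [show (1/2:ℝ≥0∞) = 2/4 by rw [ENNReal.div_eq_div_iff] <;> norm_num,
    ENNReal.div_add_div_same]; norm_num

private lemma ennq3 : (1:ℝ≥0∞) - 3/4 = 1/4 := by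
  refine ENNReal.sub_eq_of_eq_add (by simp [ENNReal.div_eq_top]) ?_
  rw [ENNReal.div_add_div_same]
  norm_num
  rw [ENNReal.div_self] <;> norm_num

private lemma ennq4 : (1/4:ℝ≥0∞) + 1/4 = 1/2 := by
  rw [ENNReal.div_add_div_same, ENNReal.div_eq_div_iff] <;> norm_num

private lemma ennq34 : (3/4:ℝ≥0∞) < 1 := by rw [ENNReal.div_lt_iff] <;> norm_num

private lemma ennq12 : (1/2:ℝ≥0∞) < 1 := by rw [ENNReal.div_lt_iff] <;> norm_num

private lemma ennq14top : (1/4:ℝ≥0∞) ≠ ⊤ := by simp [ENNReal.div_eq_top]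

/-- For a free ultrafilter `U` on `ℕ`, there is no sequence of (countably
additive) probability measures `μ n` on `ℕ` with `μ n S → 1` for `S ∈ U` and `μ n S → 0`
for `S ∉ U`. -/
theorem no_seq_of_measures_tendsto_ultrafilter_charge
    (U : Ultrafilter ℕ) (hU : (U : Filter ℕ) ≤ Filter.cofinite) :
    ¬ ∃ μ : ℕ → Measure ℕ,
        (∀ n, IsProbabilityMeasure (μ n)) ∧
        (∀ S : Set ℕ,
          (S ∈ U → Tendsto (fun n => μ n S) atTop (𝓝 1)) ∧
          (S ∉ U → Tendsto (fun n => μ n S) atTop (𝓝 0))) := by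
  rintro ⟨μ, hprob, hconv⟩
  -- finite sets are not in U
  have hfin : ∀ s : Set ℕ, s.Finite → s ∉ U := by
    intro s hs
    exact Ultrafilter.compl_mem_iff_notMem.mp (hU (by simpa [Filter.mem_cofinite] using hs))
  -- tightness
  have htight : ∀ m : ℕ, Tendsto (fun N => μ m (Set.Iio N)) atTop (𝓝 1) := by
    intro m
    have h := tendsto_measure_iUnion_atTop (μ := μ m) (s := fun N => Set.Iio N)
      (fun a b hab => Set.Iio_subset_Iio hab)
    have huniv : (⋃ N, Set.Iio N) = (Set.univ : Set ℕ) := by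
      ext x
      simp only [Set.mem_iUnion, Set.mem_Iio, Set.mem_univ, iff_true]
      exact ⟨x + 1, Nat.lt_succ_self x⟩
    rw [huniv, (hprob m).measure_univ] at h
    exact h
  -- step lemma
  have step : ∀ p : ℕ × ℕ, ∃ q : ℕ × ℕ, p.1 < q.1 ∧ p.2 < q.2 ∧
      μ q.1 (Set.Iio p.2) < 1/4 ∧ (3/4 : ℝ≥0∞) < μ q.1 (Set.Iio q.2) := by
    intro p
    have h0 : Tendsto (fun n => μ n (Set.Iio p.2)) atTop (𝓝 0) :=
      (hconv (Set.Iio p.2)).2 (hfin _ (Set.finite_Iio _))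
    have h1 : ∀ᶠ n in atTop, μ n (Set.Iio p.2) < 1/4 :=
      h0.eventually_lt_const (by norm_num)
    obtain ⟨n', hn', hlt⟩ := ((eventually_gt_atTop p.1).and h1).exists
    have h2 : ∀ᶠ N in atTop, (3/4 : ℝ≥0∞) < μ n' (Set.Iio N) :=
      (htight n').eventually_const_lt ennq34
    obtain ⟨N', hN', hgt⟩ := ((eventually_gt_atTop p.2).and h2).exists
    exact ⟨(n', N'), hn', hN', hlt, hgt⟩
  -- recursive construction
  let g : ℕ → ℕ × ℕ := fun k => Nat.rec (0, 0) (fun _ ih => Classical.choose (step ih)) k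
  have hg : ∀ k, (g k).1 < (g (k+1)).1 ∧ (g k).2 < (g (k+1)).2 ∧
      μ (g (k+1)).1 (Set.Iio (g k).2) < 1/4 ∧ (3/4 : ℝ≥0∞) < μ (g (k+1)).1 (Set.Iio (g (k+1)).2) :=
    fun k => Classical.choose_spec (step (g k))
  set n : ℕ → ℕ := fun k => (g k).1 with hn_def
  set N : ℕ → ℕ := fun k => (g k).2 with hN_def
  have hnmono : StrictMono n := strictMono_nat_of_lt_succ (fun k => (hg k).1)
  have hNmono : StrictMono N := strictMono_nat_of_lt_succ (fun k => (hg k).2.1)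
  have hsmall : ∀ k, μ (n (k+1)) (Set.Iio (N k)) < 1/4 := fun k => (hg k).2.2.1
  have hbig : ∀ k, (3/4 : ℝ≥0∞) < μ (n (k+1)) (Set.Iio (N (k+1))) := fun k => (hg k).2.2.2
  set S : Set ℕ := ⋃ j, Set.Ico (N (2*j)) (N (2*j+1)) with hS_def
  -- odd indices: μ (n (2j+1)) S > 1/2
  have hodd : ∀ j, (1/2 : ℝ≥0∞) < μ (n (2*j+1)) S := by
    intro j
    have hsub : Set.Iio (N (2*j+1)) ⊆ Set.Iio (N (2*j)) ∪ Set.Ico (N (2*j)) (N (2*j+1)) := by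
      intro x hx
      rcases lt_or_ge x (N (2*j)) with h | h
      · exact Or.inl h
      · exact Or.inr ⟨h, hx⟩
    have h1 : μ (n (2*j+1)) (Set.Iio (N (2*j+1))) ≤
        μ (n (2*j+1)) (Set.Iio (N (2*j))) + μ (n (2*j+1)) (Set.Ico (N (2*j)) (N (2*j+1))) :=
      le_trans (measure_mono hsub) (measure_union_le _ _)
    have h2 : (3/4 : ℝ≥0∞) < 1/4 + μ (n (2*j+1)) (Set.Ico (N (2*j)) (N (2*j+1))) :=
      lt_of_lt_of_le (hbig (2*j)) (le_trans h1 (add_le_add_left (hsmall (2*j)).le _))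
    have h3 : (1/2 : ℝ≥0∞) < μ (n (2*j+1)) (Set.Ico (N (2*j)) (N (2*j+1))) := by
      rw [← ennq2] at h2
      exact (ENNReal.add_lt_add_iff_left ennq14top).mp h2
    exact lt_of_lt_of_le h3 (measure_mono (Set.subset_iUnion (fun j => Set.Ico (N (2*j)) (N (2*j+1))) j))
  -- even indices: μ (n (2j+2)) S < 1/2
  have heven : ∀ j, μ (n (2*j+2)) S < 1/2 := by
    intro j
    have hsub : S ⊆ Set.Iio (N (2*j+1)) ∪ (Set.Iio (N (2*j+2)))ᶜ := by
      intro x hx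
      obtain ⟨i, hi⟩ := Set.mem_iUnion.mp hx
      rcases le_or_gt (2*i+1) (2*j+1) with h | h
      · exact Or.inl (lt_of_lt_of_le hi.2 (hNmono.monotone h))
      · have : 2*j+2 ≤ 2*i := by omega
        exact Or.inr (fun hc => absurd hc (not_lt.mpr (le_trans (hNmono.monotone this) hi.1)))
    have h1 : μ (n (2*j+2)) S ≤ μ (n (2*j+2)) (Set.Iio (N (2*j+1))) +
        μ (n (2*j+2)) ((Set.Iio (N (2*j+2)))ᶜ) :=
      le_trans (measure_mono hsub) (measure_union_le _ _)
    have hcompl : μ (n (2*j+2)) ((Set.Iio (N (2*j+2)))ᶜ) ≤ 1/4 := by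
      have := prob_compl_eq_one_sub (μ := μ (n (2*j+2))) (s := Set.Iio (N (2*j+2)))
        (MeasurableSet.of_discrete)
      rw [this]
      calc (1 : ℝ≥0∞) - μ (n (2*j+2)) (Set.Iio (N (2*j+2))) ≤ 1 - 3/4 :=
            tsub_le_tsub_left (hbig (2*j+1)).le 1
        _ = 1/4 := ennq3
    calc μ (n (2*j+2)) S ≤ μ (n (2*j+2)) (Set.Iio (N (2*j+1))) +
          μ (n (2*j+2)) ((Set.Iio (N (2*j+2)))ᶜ) := h1
      _ < 1/4 + 1/4 := ENNReal.add_lt_add_of_lt_of_le (measure_ne_top _ _) (hsmall (2*j+1)) hcompl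
      _ = 1/2 := ennq4
  -- conclude
  by_cases hSU : S ∈ U
  · have h1 := (hconv S).1 hSU
    have hsub : Tendsto (fun j => μ (n (2*j+2)) S) atTop (𝓝 1) := by
      apply h1.comp
      exact (hnmono.comp (strictMono_nat_of_lt_succ (fun k => by omega) :
        StrictMono (fun j => 2*j+2))).tendsto_atTop
    have := (hsub.eventually_const_lt ennq12).exists
    obtain ⟨j, hj⟩ := this
    exact absurd hj (not_lt.mpr (heven j).le)
  · have h0 := (hconv S).2 hSU
    have hsub : Tendsto (fun j => μ (n (2*j+1)) S) atTop (𝓝 0) := by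
      apply h0.comp
      exact (hnmono.comp (strictMono_nat_of_lt_succ (fun k => by omega) :
        StrictMono (fun j => 2*j+1))).tendsto_atTop
    have := (hsub.eventually_lt_const (show (0:ℝ≥0∞) < 1/2 by simp)).exists
    obtain ⟨j, hj⟩ := this
    exact absurd hj (not_lt.mpr (hodd j).le)
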